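/- Let A, B : ℝ → matrix-valued functions with A(t) ∈ ℝ^{n×n} and B(t) ∈ ℝ^{n×p} continuous on [t₀, T_f], and let Φ : ℝ × ℝ → ℝ^{n×n} be a transition matrix for A, i.e. for every τ the map t ↦ Φ(t,τ) is differentiable with ∂ₜΦ(t,τ) = A(t)·Φ(t,τ) and Φ(τ,τ) = I, and (t,τ) ↦ Φ(t,τ) and (t,τ) ↦ ∂ₜΦ(t,τ) are continuous on [t₀,T_f]². Then the controllability Gramian P(t) = ∫_{t₀}^t Φ(t,τ) B(τ) B(τ)ᵀ Φ(t,τ)ᵀ dτ is differentiable on [t₀,T_f] and satisfies the differential Lyapunov equation Ṗ(t) = A(t) P(t) + P(t) A(t)ᵀ + B(t) B(t)ᵀ with P(t₀) = 0. -/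

import Mathlib

open Matrix Set intervalIntegral

attribute [local instance] Matrix.normedAddCommGroup Matrix.normedSpace

set_option maxHeartbeats 1000000

namespace ControllabilityGramianAux

variable {a b c : ℕ}

lemma contOn_matMul {X : Type*} [TopologicalSpace X] {f : X → Matrix (Fin a) (Fin b) ℝ}
    {g : X → Matrix (Fin b) (Fin c) ℝ} {s : Set X} (hf : ContinuousOn f s)
    (hg : ContinuousOn g s) : ContinuousOn (fun x => f x * g x) s := by
  rw [continuousOn_iff_continuous_restrict] at *
  exact hf.matrix_mul hg

lemma contOn_transpose {X : Type*} [TopologicalSpace X] {f : X → Matrix (Fin a) (Fin b) ℝ}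
    {s : Set X} (hf : ContinuousOn f s) : ContinuousOn (fun x => (f x)ᵀ) s := by
  rw [continuousOn_iff_continuous_restrict] at *
  exact hf.matrix_transpose

/-- Matrix multiplication as a continuous bilinear map (elementwise sup norm). -/
noncomputable def mulCLM (a b c : ℕ) :
    Matrix (Fin a) (Fin b) ℝ →L[ℝ] Matrix (Fin b) (Fin c) ℝ →L[ℝ] Matrix (Fin a) (Fin c) ℝ :=
  LinearMap.toContinuousLinearMap
  { toFun := fun M => LinearMap.toContinuousLinearMap
      { toFun := fun N => M * N
        map_add' := fun x y => Matrix.mul_add M x y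
        map_smul' := fun r x => Matrix.mul_smul M r x }
    map_add' := fun M N => by
      refine ContinuousLinearMap.ext fun X => ?_
      simp [Matrix.add_mul]
    map_smul' := fun r M => by
      refine ContinuousLinearMap.ext fun X => ?_
      simp [Matrix.smul_mul] }

@[simp] lemma mulCLM_apply (M : Matrix (Fin a) (Fin b) ℝ) (N : Matrix (Fin b) (Fin c) ℝ) :
    mulCLM a b c M N = M * N := rfl

lemma HasDerivWithinAt.matMul {f : ℝ → Matrix (Fin a) (Fin b) ℝ}
    {g : ℝ → Matrix (Fin b) (Fin c) ℝ} {f' : Matrix (Fin a) (Fin b) ℝ}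
    {g' : Matrix (Fin b) (Fin c) ℝ} {s : Set ℝ} {x : ℝ}
    (hf : HasDerivWithinAt f f' s x) (hg : HasDerivWithinAt g g' s x) :
    HasDerivWithinAt (fun u => f u * g u) (f' * g x + f x * g') s x := by
  have hb := (mulCLM a b c).isBoundedBilinearMap
  have h := (hb.hasFDerivAt (f x, g x)).comp_hasDerivWithinAt x (hf.prodMk hg)
  have he : (hb.deriv (f x, g x)) (f', g') = f' * g x + f x * g' := by
    rw [hb.deriv_apply]; simp [add_comm]; rfl
  rw [he] at h
  exact h

/-- Transpose as a continuous linear map. -/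
noncomputable def transCLM (a b : ℕ) :
    Matrix (Fin a) (Fin b) ℝ →L[ℝ] Matrix (Fin b) (Fin a) ℝ :=
  LinearMap.toContinuousLinearMap
  { toFun := Matrix.transpose
    map_add' := Matrix.transpose_add
    map_smul' := Matrix.transpose_smul }

@[simp] lemma transCLM_apply (M : Matrix (Fin a) (Fin b) ℝ) : transCLM a b M = Mᵀ := rfl

lemma HasDerivWithinAt.matTranspose {f : ℝ → Matrix (Fin a) (Fin b) ℝ}
    {f' : Matrix (Fin a) (Fin b) ℝ} {s : Set ℝ} {x : ℝ}
    (hf : HasDerivWithinAt f f' s x) :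
    HasDerivWithinAt (fun u => (f u)ᵀ) f'ᵀ s x := by
  have h := ((transCLM a b).hasFDerivAt (x := f x)).comp_hasDerivWithinAt x hf
  exact h

end ControllabilityGramianAux

open ControllabilityGramianAux MeasureTheory

/-- If `Φ` is a transition matrix for the time-dependent coefficient
`A : ℝ → ℝ^{n×n}` and `B : ℝ → ℝ^{n×p}` is continuous, then the controllability Gramian
`P t = ∫_{t₀}^t Φ t τ * B τ * (B τ)ᵀ * (Φ t τ)ᵀ dτ` solves the differential Lyapunov equation
`Ṗ = A P + P Aᵀ + B Bᵀ`, `P t₀ = 0`, on `[t₀, T_f]`. -/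
theorem controllability_gramian_dle
    (n p : ℕ) (hn : 0 < n) (hp : 0 < p) (t₀ Tf : ℝ) (ht : t₀ ≤ Tf)
    (A : ℝ → Matrix (Fin n) (Fin n) ℝ)
    (B : ℝ → Matrix (Fin n) (Fin p) ℝ)
    (hA : ContinuousOn A (Icc t₀ Tf))
    (hB : ContinuousOn B (Icc t₀ Tf))
    (Φ : ℝ → ℝ → Matrix (Fin n) (Fin n) ℝ)
    (hΦderiv : ∀ τ ∈ Icc t₀ Tf, ∀ t ∈ Icc t₀ Tf,
      HasDerivWithinAt (fun u => Φ u τ) (A t * Φ t τ) (Icc t₀ Tf) t)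
    (hΦinit : ∀ τ, Φ τ τ = 1)
    (hΦcont : ContinuousOn (fun pr : ℝ × ℝ => Φ pr.1 pr.2) (Icc t₀ Tf ×ˢ Icc t₀ Tf))
    (hΦ'cont : ContinuousOn (fun pr : ℝ × ℝ => A pr.1 * Φ pr.1 pr.2) (Icc t₀ Tf ×ˢ Icc t₀ Tf))
    (P : ℝ → Matrix (Fin n) (Fin n) ℝ)
    (hP : ∀ t, P t = ∫ τ in t₀..t, Φ t τ * (B τ * (B τ)ᵀ) * (Φ t τ)ᵀ) :
    P t₀ = 0 ∧
      ∀ t ∈ Icc t₀ Tf,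
        HasDerivWithinAt P (A t * P t + P t * (A t)ᵀ + B t * (B t)ᵀ) (Icc t₀ Tf) t := by
  letI : ENormedAddMonoid (Matrix (Fin n) (Fin n) ℝ) := NormedAddGroup.toENormedAddMonoid
  obtain ⟨s, hs⟩ : ∃ s : Set ℝ, s = Icc t₀ Tf := ⟨_, rfl⟩
  rw [← hs] at hA hB hΦderiv hΦcont hΦ'cont ⊢
  obtain ⟨M, hM⟩ : ∃ M : ℝ → Matrix (Fin n) (Fin n) ℝ, M = fun τ => B τ * (B τ)ᵀ := ⟨_, rfl⟩
  obtain ⟨F, hF⟩ : ∃ F : ℝ → ℝ → Matrix (Fin n) (Fin n) ℝ,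
    F = fun x τ => Φ x τ * M τ * (Φ x τ)ᵀ := ⟨_, rfl⟩
  obtain ⟨D, hD⟩ : ∃ D : ℝ → ℝ → Matrix (Fin n) (Fin n) ℝ,
    D = fun x τ => A x * F x τ + F x τ * (A x)ᵀ := ⟨_, rfl⟩
  have hP' : ∀ x, P x = ∫ τ in t₀..x, F x τ := by
    intro x; rw [hF]; simp only [hM]; exact hP x
  -- continuity facts
  have hMc : ContinuousOn M s := by
    rw [hM]; exact contOn_matMul hB (contOn_transpose hB)
  have hM2 : ContinuousOn (fun pr : ℝ × ℝ => M pr.2) (s ×ˢ s) :=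
    hMc.comp continuous_snd.continuousOn (fun pr hpr => hpr.2)
  have hFc : ContinuousOn (fun pr : ℝ × ℝ => F pr.1 pr.2) (s ×ˢ s) := by
    rw [hF]; exact contOn_matMul (contOn_matMul hΦcont hM2) (contOn_transpose hΦcont)
  have hDeq : ∀ x τ, D x τ = (A x * Φ x τ) * (M τ * (Φ x τ)ᵀ)
      + Φ x τ * M τ * (A x * Φ x τ)ᵀ := by
    intro x τ
    rw [hD, hF]
    simp only [Matrix.transpose_mul, Matrix.mul_assoc]
  have hDc : ContinuousOn (fun pr : ℝ × ℝ => D pr.1 pr.2) (s ×ˢ s) := by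
    have h1 : ContinuousOn
        (fun pr : ℝ × ℝ => (A pr.1 * Φ pr.1 pr.2) * (M pr.2 * (Φ pr.1 pr.2)ᵀ)
          + Φ pr.1 pr.2 * M pr.2 * (A pr.1 * Φ pr.1 pr.2)ᵀ) (s ×ˢ s) := by
      exact (contOn_matMul hΦ'cont (contOn_matMul hM2 (contOn_transpose hΦcont))).add
        (contOn_matMul (contOn_matMul hΦcont hM2) (contOn_transpose hΦ'cont))
    refine h1.congr fun pr hpr => ?_
    exact hDeq pr.1 pr.2
  -- derivative of F in the first variable
  have hFderiv : ∀ τ ∈ s, ∀ x ∈ s, HasDerivWithinAt (fun u => F u τ) (D x τ) s x := by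
    intro τ hτ x hx
    have h1 := hΦderiv τ hτ x hx
    have h2 : HasDerivWithinAt (fun u => Φ u τ * M τ) (A x * Φ x τ * M τ) s x := by
      simpa using HasDerivWithinAt.matMul h1 (hasDerivWithinAt_const x s (M τ))
    have h3 : HasDerivWithinAt (fun u => (Φ u τ)ᵀ) ((A x * Φ x τ)ᵀ) s x :=
      HasDerivWithinAt.matTranspose h1
    have h4 := HasDerivWithinAt.matMul h2 h3
    have : A x * Φ x τ * M τ * (Φ x τ)ᵀ + Φ x τ * M τ * (A x * Φ x τ)ᵀ = D x τ := by
      rw [hDeq]; rw [Matrix.mul_assoc (A x * Φ x τ)]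
    rw [this] at h4
    rw [hF]
    exact h4
  -- integrability helpers
  have hordconn : ∀ {c d : ℝ}, c ∈ s → d ∈ s → uIcc c d ⊆ s := by
    intro c d hc hd
    rw [hs]
    exact Set.ordConnected_Icc.uIcc_subset (hs ▸ hc) (hs ▸ hd)
  have hFslice : ∀ x ∈ s, ContinuousOn (fun τ => F x τ) s := by
    intro x hx
    exact hFc.comp ((continuous_const.prodMk continuous_id).continuousOn)
      (fun τ hτ => ⟨hx, hτ⟩)
  have hDslice : ∀ x ∈ s, ContinuousOn (fun τ => D x τ) s := by
    intro x hx
    exact hDc.comp ((continuous_const.prodMk continuous_id).continuousOn)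
      (fun τ hτ => ⟨hx, hτ⟩)
  have hFint : ∀ x ∈ s, ∀ c ∈ s, ∀ d ∈ s,
      IntervalIntegrable (fun τ => F x τ) volume c d := by
    intro x hx c hc d hd
    exact ((hFslice x hx).mono (hordconn hc hd)).intervalIntegrable
  have hDint : ∀ x ∈ s, ∀ c ∈ s, ∀ d ∈ s,
      IntervalIntegrable (fun τ => D x τ) volume c d := by
    intro x hx c hc d hd
    exact ((hDslice x hx).mono (hordconn hc hd)).intervalIntegrable
  constructor
  · rw [hP t₀, intervalIntegral.integral_same]
  intro t htm
  have htm' : t ∈ Icc t₀ Tf := by rw [hs] at htm; exact htm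
  rw [← hs] at htm'
  have ht0 : t₀ ≤ t := by rw [hs] at htm; exact htm.1
  have htT : t ≤ Tf := by rw [hs] at htm; exact htm.2
  have ht₀m : t₀ ∈ s := by rw [hs]; exact ⟨le_refl _, ht⟩
  obtain ⟨L₁, hL₁⟩ : ∃ L : Matrix (Fin n) (Fin n) ℝ, L = ∫ τ in t₀..t, D t τ := ⟨_, rfl⟩
  have hFtt : F t t = B t * (B t)ᵀ := by
    rw [hF]; simp only [hΦinit t, hM]; simp
  -- identify the claimed derivative
  have hLeq : A t * P t + P t * (A t)ᵀ + B t * (B t)ᵀ = L₁ + F t t := by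
    have hint : IntervalIntegrable (fun τ => F t τ) volume t₀ t := hFint t htm t₀ ht₀m t htm
    have e1 : (∫ τ in t₀..t, A t * F t τ) = A t * P t := by
      have := (mulCLM n n n (A t)).intervalIntegral_comp_comm hint
      rw [hP' t]; exact this
    have e2 : (∫ τ in t₀..t, F t τ * (A t)ᵀ) = P t * (A t)ᵀ := by
      have := ((mulCLM n n n).flip ((A t)ᵀ)).intervalIntegral_comp_comm hint
      rw [hP' t]; exact this
    have e3 : L₁ = (∫ τ in t₀..t, A t * F t τ) + ∫ τ in t₀..t, F t τ * (A t)ᵀ := by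
      rw [hL₁, ← intervalIntegral.integral_add]
      · simp only [hD]
      · exact (((contOn_matMul (continuousOn_const) (hFslice t htm))).mono
          (hordconn ht₀m htm)).intervalIntegrable
      · exact (((contOn_matMul (hFslice t htm) (continuousOn_const))).mono
          (hordconn ht₀m htm)).intervalIntegrable
    rw [e3, e1, e2, hFtt]
  rw [hLeq]
  -- main estimate
  erw [hasDerivWithinAt_iff_isLittleO]
  rw [Asymptotics.isLittleO_iff]
  intro c hc
  have hden : (0:ℝ) < Tf - t₀ + 1 := by linarith
  obtain ⟨ε, hε⟩ : ∃ e : ℝ, e = c / (Tf - t₀ + 1) := ⟨_, rfl⟩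
  have hεpos : 0 < ε := hε ▸ div_pos hc hden
  -- uniform continuity of F and D on the compact square
  have hKcomp : IsCompact (s ×ˢ s) := by
    rw [hs]; exact (isCompact_Icc).prod (isCompact_Icc)
  have hFu := Metric.uniformContinuousOn_iff.mp
    (hKcomp.uniformContinuousOn_of_continuous hFc) ε hεpos
  have hDu := Metric.uniformContinuousOn_iff.mp
    (hKcomp.uniformContinuousOn_of_continuous hDc) ε hεpos
  obtain ⟨δ₁, hδ₁, hF_est⟩ := hFu
  obtain ⟨δ₂, hδ₂, hD_est⟩ := hDu
  obtain ⟨δ, hδ⟩ : ∃ d : ℝ, d = min δ₁ δ₂ := ⟨_, rfl⟩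
  have hδpos : 0 < δ := hδ ▸ lt_min hδ₁ hδ₂
  have hev : ∀ᶠ x in nhdsWithin t s, x ∈ s ∧ dist x t < δ := by
    filter_upwards [self_mem_nhdsWithin,
      mem_nhdsWithin_of_mem_nhds (Metric.ball_mem_nhds t hδpos)] with x hx hx2
    exact ⟨hx, hx2⟩
  filter_upwards [hev] with x hx
  obtain ⟨hxs, hxδ⟩ := hx
  have hsub : uIcc t x ⊆ s := hordconn htm hxs
  -- splitting
  obtain ⟨I1, hI1⟩ : ∃ I : Matrix (Fin n) (Fin n) ℝ,
    I = ∫ τ in t₀..t, (F x τ - F t τ - (x - t) • D t τ) := ⟨_, rfl⟩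
  obtain ⟨I2, hI2⟩ : ∃ I : Matrix (Fin n) (Fin n) ℝ,
    I = ∫ τ in t..x, (F x τ - F t t) := ⟨_, rfl⟩
  have hsplit : P x - P t - (x - t) • (L₁ + F t t) = I1 + I2 := by
    have a1 : IntervalIntegrable (fun τ => F x τ) volume t₀ t := hFint x hxs t₀ ht₀m t htm
    have a2 : IntervalIntegrable (fun τ => F x τ) volume t x := hFint x hxs t htm x hxs
    have a3 : IntervalIntegrable (fun τ => F t τ) volume t₀ t := hFint t htm t₀ ht₀m t htm
    have a4 : IntervalIntegrable (fun τ => (x - t) • D t τ) volume t₀ t :=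
      (hDint t htm t₀ ht₀m t htm).smul (x - t)
    have e1 : (∫ τ in t₀..t, F x τ) + (∫ τ in t..x, F x τ) = ∫ τ in t₀..x, F x τ :=
      intervalIntegral.integral_add_adjacent_intervals a1 a2
    have e2 : I1 = (∫ τ in t₀..t, F x τ) - (∫ τ in t₀..t, F t τ) - (x - t) • L₁ := by
      rw [hI1, intervalIntegral.integral_sub (a1.sub a3) a4,
        intervalIntegral.integral_sub a1 a3, intervalIntegral.integral_smul, hL₁]
    have e3 : I2 = (∫ τ in t..x, F x τ) - (x - t) • F t t := by
      rw [hI2, intervalIntegral.integral_sub a2 intervalIntegrable_const,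
        intervalIntegral.integral_const]
    rw [hP' x, hP' t, ← e1, e2, e3, smul_add]
    abel
  rw [hsplit]
  -- bound I1
  have hb1 : ∀ τ ∈ Set.uIoc t₀ t, ‖F x τ - F t τ - (x - t) • D t τ‖ ≤ ε * |x - t| := by
    intro τ hτ
    have hτs : τ ∈ s := by
      have : Set.uIoc t₀ t ⊆ uIcc t₀ t := Set.Ioc_subset_Icc_self
      exact hordconn ht₀m htm (this hτ)
    -- mean value on uIcc t x for g u := F u τ - (u - t) • D t τ
    have hg : ∀ u ∈ uIcc t x,
        HasDerivWithinAt (fun v => F v τ - (v - t) • D t τ) (D u τ - D t τ) (uIcc t x) u := by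
      intro u hu
      have h1 := (hFderiv τ hτs u (hsub hu)).mono hsub
      have h2 : HasDerivWithinAt (fun v => (v - t) • D t τ) (D t τ) (uIcc t x) u := by
        have := ((hasDerivWithinAt_id u (uIcc t x)).sub_const t).smul_const (D t τ)
        simp at this; exact this
      exact h1.sub h2
    have hbound : ∀ u ∈ uIcc t x, ‖D u τ - D t τ‖ ≤ ε := by
      intro u hu
      have hus : u ∈ s := hsub hu
      have hdist : dist (u, τ) (t, τ) < δ₂ := by
        rw [Prod.dist_eq]
        simp only [dist_self]
        have h1 : dist u t ≤ dist x t := by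
          rw [Real.dist_eq, Real.dist_eq]
          exact abs_sub_left_of_mem_uIcc hu
        calc max (dist u t) 0 ≤ dist x t := by
              simp [h1, dist_nonneg.trans h1]
          _ < δ₂ := lt_of_lt_of_le (hδ ▸ hxδ) (min_le_right _ _)
      have := hD_est (u, τ) ⟨hus, hτs⟩ (t, τ) ⟨htm, hτs⟩ hdist
      rw [dist_eq_norm] at this
      exact this.le
    have := (convex_uIcc t x).norm_image_sub_le_of_norm_hasDerivWithin_le hg hbound
      (left_mem_uIcc) (right_mem_uIcc)
    have h2 := this
    simp only [sub_self, zero_smul, sub_zero] at h2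
    rw [sub_right_comm] at h2
    simpa [Real.norm_eq_abs, mul_comm] using h2
  have hI1bound : ‖I1‖ ≤ ε * |x - t| * (Tf - t₀) := by
    have h := intervalIntegral.norm_integral_le_of_norm_le_const hb1
    have habs : |t - t₀| ≤ Tf - t₀ := by
      rw [abs_of_nonneg (by linarith)]; linarith
    calc ‖I1‖ ≤ ε * |x - t| * |t - t₀| := hI1 ▸ h
      _ ≤ ε * |x - t| * (Tf - t₀) := by
          apply mul_le_mul_of_nonneg_left habs
          positivity
  -- bound I2
  have hb2 : ∀ τ ∈ Set.uIoc t x, ‖F x τ - F t t‖ ≤ ε := by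
    intro τ hτ
    have hτu : τ ∈ uIcc t x := Set.Ioc_subset_Icc_self hτ
    have hτs : τ ∈ s := hsub hτu
    have hdist : dist (x, τ) (t, t) < δ₁ := by
      rw [Prod.dist_eq]
      have h1 : dist τ t ≤ dist x t := by
        rw [Real.dist_eq, Real.dist_eq]
        exact abs_sub_left_of_mem_uIcc hτu
      have h2 : dist x t < δ₁ := lt_of_lt_of_le (hδ ▸ hxδ) (min_le_left _ _)
      exact max_lt h2 (lt_of_le_of_lt h1 h2)
    have := hF_est (x, τ) ⟨hxs, hτs⟩ (t, t) ⟨htm, htm⟩ hdist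
    rw [dist_eq_norm] at this
    exact this.le
  have hI2bound : ‖I2‖ ≤ ε * |x - t| :=
    hI2 ▸ intervalIntegral.norm_integral_le_of_norm_le_const hb2
  have hfinal : ‖I1 + I2‖ ≤ ε * (Tf - t₀ + 1) * |x - t| := by
    calc ‖I1 + I2‖ ≤ ‖I1‖ + ‖I2‖ := norm_add_le _ _
      _ ≤ ε * |x - t| * (Tf - t₀) + ε * |x - t| := add_le_add hI1bound hI2bound
      _ = ε * (Tf - t₀ + 1) * |x - t| := by ring
  have hεc : ε * (Tf - t₀ + 1) = c := by
    rw [hε]; field_simp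
  rw [hεc] at hfinal
  simpa [Real.norm_eq_abs] using hfinal
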